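/- Let ρ ≠ σ be 2×2 density matrices and H(λ) = λ(μρ + (1−μ)σ) − (ρ−σ) with μ = (Tr σ² − Tr ρσ)/Tr(ρ−σ)². Then det H(λ) = 0 if and only if λ = ±λ*, where λ* = Tr(ρ−σ)² / sqrt(Tr(ρ−σ)² − Tr ρ²·Tr σ² + (Tr ρσ)²), and the quantity under the square root is strictly positive. -/
import Mathlib


open Matrix
open scoped ComplexOrder

noncomputable section

/-- A density matrix: positive semidefinite with unit trace. -/
def IsDensity {d : ℕ} (rho : Matrix (Fin d) (Fin d) ℂ) : Prop :=
  rho.PosSemidef ∧ rho.trace = 1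

/-- The coefficient `μ = (Tr σ² − Tr ρσ)/Tr(ρ−σ)²`. -/
def muCoef {d : ℕ} (rho sigma : Matrix (Fin d) (Fin d) ℂ) : ℂ :=
  ((sigma * sigma).trace - (rho * sigma).trace) / (((rho - sigma) * (rho - sigma)).trace)

/-- The affine combination `ω = μρ + (1−μ)σ`. -/
def omegaOp {d : ℕ} (rho sigma : Matrix (Fin d) (Fin d) ℂ) : Matrix (Fin d) (Fin d) ℂ :=
  muCoef rho sigma • rho + (1 - muCoef rho sigma) • sigma

/-- The family `H(λ) = λω − (ρ−σ)`. -/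
def Hmat (rho sigma : Matrix (Fin 2) (Fin 2) ℂ) (lam : ℝ) : Matrix (Fin 2) (Fin 2) ℂ :=
  (lam : ℂ) • omegaOp rho sigma - (rho - sigma)

lemma keypos (p z1 z2 q w1 w2 : ℝ)
    (h1 : z1^2+z2^2 ≤ p*(1-p)) (h2 : w1^2+w2^2 ≤ q*(1-q))
    (hE : 0 < (p-q)^2+((z1-w1)^2+(z2-w2)^2)) :
    0 < (2*(p-q)^2+2*((z1-w1)^2+(z2-w2)^2))
        - (p^2+(1-p)^2+2*(z1^2+z2^2))*(q^2+(1-q)^2+2*(w1^2+w2^2))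
        + (p*q+(1-p)*(1-q)+2*(z1*w1+z2*w2))^2 := by
  nlinarith [mul_nonneg (sub_nonneg.mpr h1) hE.le, mul_nonneg (sub_nonneg.mpr h2) hE.le,
    sq_nonneg ((2*p-1)*(q-p)+2*z1*(w1-z1)+2*z2*(w2-z2) + ((p-q)^2+(z1-w1)^2+(z2-w2)^2)),
    sq_nonneg ((p-q)^2+(z1-w1)^2+(z2-w2)^2), hE]

lemma aux_entries (rho : Matrix (Fin 2) (Fin 2) ℂ) (h : IsDensity rho) :
    rho 0 0 = ((rho 0 0).re : ℂ) ∧ rho 1 0 = (starRingEnd ℂ) (rho 0 1) ∧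
    rho 1 1 = 1 - ((rho 0 0).re : ℂ) ∧
    (rho 0 1).re^2 + (rho 0 1).im^2 ≤ (rho 0 0).re * (1 - (rho 0 0).re) := by
  obtain ⟨hpsd, htr⟩ := h
  have hherm := hpsd.1
  have h00 : rho 0 0 = ((rho 0 0).re : ℂ) := by
    have := congrFun (congrFun hherm 0) 0
    rw [Matrix.conjTranspose_apply] at this
    exact (Complex.conj_eq_iff_re.mp this).symm
  have h10 : rho 1 0 = (starRingEnd ℂ) (rho 0 1) := by
    have := congrFun (congrFun hherm 1) 0
    rw [Matrix.conjTranspose_apply] at this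
    exact this.symm
  have h11 : rho 1 1 = 1 - ((rho 0 0).re : ℂ) := by
    rw [Matrix.trace_fin_two] at htr
    rw [← h00]; linear_combination htr
  refine ⟨h00, h10, h11, ?_⟩
  have hdet : rho.det = ((∏ i, hherm.eigenvalues i : ℝ) : ℂ) := by
    rw [hherm.det_eq_prod_eigenvalues]; push_cast; rfl
  have hdet2 : rho.det = (((rho 0 0).re * (1 - (rho 0 0).re)
      - ((rho 0 1).re^2 + (rho 0 1).im^2) : ℝ) : ℂ) := by
    rw [Matrix.det_fin_two, h00, h10, h11, Complex.mul_conj]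
    push_cast
    simp only [Complex.normSq_apply, Complex.ext_iff, Complex.sub_re, Complex.sub_im,
      Complex.mul_re, Complex.mul_im, Complex.one_re, Complex.one_im, Complex.ofReal_re,
      Complex.ofReal_im, Complex.add_re, Complex.add_im, ← Complex.ofReal_pow]
    constructor <;> ring
  have hprod : (0:ℝ) ≤ ∏ i, hherm.eigenvalues i :=
    Finset.prod_nonneg fun i _ => hpsd.eigenvalues_nonneg i
  have heq : ((rho 0 0).re * (1 - (rho 0 0).re) - ((rho 0 1).re^2 + (rho 0 1).im^2) : ℝ)
      = ∏ i, hherm.eigenvalues i := by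
    have := hdet.symm.trans hdet2
    exact_mod_cast this.symm
  linarith [heq ▸ hprod]

set_option maxHeartbeats 1000000 in
lemma h2T_aux (p z1 z2 q w1 w2 lam m : ℝ)
    (hT0 : (2*(p-q)^2+2*((z1-w1)^2+(z2-w2)^2) : ℝ) ≠ 0)
    (hm : m * (2*(p-q)^2+2*((z1-w1)^2+(z2-w2)^2))
        = (q^2+(1-q)^2+2*(w1^2+w2^2)) - (p*q+(1-p)*(1-q)+2*(z1*w1+z2*w2))) :
    2*(2*(p-q)^2+2*((z1-w1)^2+(z2-w2)^2))
      * ((lam*(m*p+(1-m)*q)-(p-q))*(lam*(m*(1-p)+(1-m)*(1-q))+(p-q))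
      - ((lam*(m*z1+(1-m)*w1)-(z1-w1))^2 + (lam*(m*z2+(1-m)*w2)-(z2-w2))^2))
    = lam^2*((2*(p-q)^2+2*((z1-w1)^2+(z2-w2)^2))
        - (p^2+(1-p)^2+2*(z1^2+z2^2))*(q^2+(1-q)^2+2*(w1^2+w2^2))
        + (p*q+(1-p)*(1-q)+2*(z1*w1+z2*w2))^2)
      - (2*(p-q)^2+2*((z1-w1)^2+(z2-w2)^2))^2 := by
  have key2 : (2*(p-q)^2+2*((z1-w1)^2+(z2-w2)^2)) *
      ((2*(2*(p-q)^2+2*((z1-w1)^2+(z2-w2)^2))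
      * ((lam*(m*p+(1-m)*q)-(p-q))*(lam*(m*(1-p)+(1-m)*(1-q))+(p-q))
      - ((lam*(m*z1+(1-m)*w1)-(z1-w1))^2 + (lam*(m*z2+(1-m)*w2)-(z2-w2))^2)))
      - (lam^2*((2*(p-q)^2+2*((z1-w1)^2+(z2-w2)^2))
        - (p^2+(1-p)^2+2*(z1^2+z2^2))*(q^2+(1-q)^2+2*(w1^2+w2^2))
        + (p*q+(1-p)*(1-q)+2*(z1*w1+z2*w2))^2)
      - (2*(p-q)^2+2*((z1-w1)^2+(z2-w2)^2))^2)) = 0 := by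
    linear_combination
      (2*(-lam^2*((p-q)^2+(z1-w1)^2+(z2-w2)^2))
          *(m*(2*(p-q)^2+2*((z1-w1)^2+(z2-w2)^2))
            + ((q^2+(1-q)^2+2*(w1^2+w2^2)) - (p*q+(1-p)*(1-q)+2*(z1*w1+z2*w2))))
        + 2*(lam*(p-q)*(lam*(1-2*q)+2*(p-q)) - 2*lam^2*(w1*(z1-w1)+w2*(z2-w2))
            + 2*lam*((z1-w1)^2+(z2-w2)^2))*(2*(p-q)^2+2*((z1-w1)^2+(z2-w2)^2))) * hm
  rcases mul_eq_zero.mp key2 with h | h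
  · exact absurd h hT0
  · exact sub_eq_zero.mp h

set_option maxHeartbeats 2000000 in
theorem det_Hmat_zero_iff (rho sigma : Matrix (Fin 2) (Fin 2) ℂ)
    (hrho : IsDensity rho) (hsigma : IsDensity sigma) (hne : rho ≠ sigma) :
    0 < (((rho - sigma) * (rho - sigma)).trace).re
        - ((rho * rho).trace).re * ((sigma * sigma).trace).re
        + (((rho * sigma).trace).re) ^ 2 ∧
    ∀ lam : ℝ,
      ((Hmat rho sigma lam).det = 0 ↔
        lam = (((rho - sigma) * (rho - sigma)).trace).re /
                Real.sqrt ((((rho - sigma) * (rho - sigma)).trace).re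
                  - ((rho * rho).trace).re * ((sigma * sigma).trace).re
                  + (((rho * sigma).trace).re) ^ 2) ∨
        lam = -((((rho - sigma) * (rho - sigma)).trace).re /
                Real.sqrt ((((rho - sigma) * (rho - sigma)).trace).re
                  - ((rho * rho).trace).re * ((sigma * sigma).trace).re
                  + (((rho * sigma).trace).re) ^ 2))) := by
  obtain ⟨h00ρ, h10ρ, h11ρ, hd1⟩ := aux_entries rho hrho
  obtain ⟨h00σ, h10σ, h11σ, hd2⟩ := aux_entries sigma hsigma
  set p := (rho 0 0).re with hp
  set z1 := (rho 0 1).re with hz1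
  set z2 := (rho 0 1).im with hz2
  set q := (sigma 0 0).re with hq
  set w1 := (sigma 0 1).re with hw1
  set w2 := (sigma 0 1).im with hw2
  have htrA : (rho * rho).trace = ((p^2+(1-p)^2+2*(z1^2+z2^2) : ℝ) : ℂ) := by
    rw [Matrix.trace_fin_two]
    simp only [Matrix.mul_apply, Fin.sum_univ_two]
    rw [h00ρ, h10ρ, h11ρ]
    simp only [Complex.ext_iff, Complex.add_re, Complex.add_im, Complex.sub_re,
      Complex.sub_im, Complex.mul_re, Complex.mul_im, Complex.one_re, Complex.one_im,
      Complex.ofReal_re, Complex.ofReal_im, Complex.conj_re, Complex.conj_im]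
    constructor <;> ring
  have htrB : (sigma * sigma).trace = ((q^2+(1-q)^2+2*(w1^2+w2^2) : ℝ) : ℂ) := by
    rw [Matrix.trace_fin_two]
    simp only [Matrix.mul_apply, Fin.sum_univ_two]
    rw [h00σ, h10σ, h11σ]
    simp only [Complex.ext_iff, Complex.add_re, Complex.add_im, Complex.sub_re,
      Complex.sub_im, Complex.mul_re, Complex.mul_im, Complex.one_re, Complex.one_im,
      Complex.ofReal_re, Complex.ofReal_im, Complex.conj_re, Complex.conj_im]
    constructor <;> ring
  have htrC : (rho * sigma).trace = ((p*q+(1-p)*(1-q)+2*(z1*w1+z2*w2) : ℝ) : ℂ) := by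
    rw [Matrix.trace_fin_two]
    simp only [Matrix.mul_apply, Fin.sum_univ_two]
    rw [h00ρ, h10ρ, h11ρ, h00σ, h10σ, h11σ]
    simp only [Complex.ext_iff, Complex.add_re, Complex.add_im, Complex.sub_re,
      Complex.sub_im, Complex.mul_re, Complex.mul_im, Complex.one_re, Complex.one_im,
      Complex.ofReal_re, Complex.ofReal_im, Complex.conj_re, Complex.conj_im]
    constructor <;> ring
  have htrT : ((rho - sigma) * (rho - sigma)).trace
      = ((2*(p-q)^2+2*((z1-w1)^2+(z2-w2)^2) : ℝ) : ℂ) := by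
    rw [Matrix.trace_fin_two]
    simp only [Matrix.mul_apply, Fin.sum_univ_two, Matrix.sub_apply]
    rw [h00ρ, h10ρ, h11ρ, h00σ, h10σ, h11σ]
    simp only [Complex.ext_iff, Complex.add_re, Complex.add_im, Complex.sub_re,
      Complex.sub_im, Complex.mul_re, Complex.mul_im, Complex.one_re, Complex.one_im,
      Complex.ofReal_re, Complex.ofReal_im, Complex.conj_re, Complex.conj_im]
    constructor <;> ring
  have hE : 0 < (p-q)^2+((z1-w1)^2+(z2-w2)^2) := by
    rcases lt_or_eq_of_le (by positivity : (0:ℝ) ≤ (p-q)^2+((z1-w1)^2+(z2-w2)^2)) with h | h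
    · exact h
    · exfalso
      apply hne
      have e1 : p = q := by nlinarith [sq_nonneg (p-q), sq_nonneg (z1-w1), sq_nonneg (z2-w2)]
      have e2 : z1 = w1 := by nlinarith [sq_nonneg (p-q), sq_nonneg (z1-w1), sq_nonneg (z2-w2)]
      have e3 : z2 = w2 := by nlinarith [sq_nonneg (p-q), sq_nonneg (z1-w1), sq_nonneg (z2-w2)]
      have ez : rho 0 1 = sigma 0 1 := Complex.ext e2 e3
      ext i j
      fin_cases i <;> fin_cases j
      · show rho 0 0 = sigma 0 0
        rw [h00ρ, h00σ, e1]
      · show rho 0 1 = sigma 0 1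
        exact ez
      · show rho 1 0 = sigma 1 0
        rw [h10ρ, h10σ, ez]
      · show rho 1 1 = sigma 1 1
        rw [h11ρ, h11σ, e1]
  have hD0 : 0 < (2*(p-q)^2+2*((z1-w1)^2+(z2-w2)^2))
        - (p^2+(1-p)^2+2*(z1^2+z2^2))*(q^2+(1-q)^2+2*(w1^2+w2^2))
        + (p*q+(1-p)*(1-q)+2*(z1*w1+z2*w2))^2 := keypos p z1 z2 q w1 w2 hd1 hd2 hE
  rw [htrA, htrB, htrC, htrT]
  simp only [Complex.ofReal_re]
  set A : ℝ := p^2+(1-p)^2+2*(z1^2+z2^2) with hA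
  set B : ℝ := q^2+(1-q)^2+2*(w1^2+w2^2) with hB
  set C : ℝ := p*q+(1-p)*(1-q)+2*(z1*w1+z2*w2) with hC
  set T : ℝ := 2*(p-q)^2+2*((z1-w1)^2+(z2-w2)^2) with hT
  have hT0 : (0:ℝ) < T := by rw [hT]; linarith [hE]
  refine ⟨hD0, fun lam => ?_⟩
  set s : ℝ := Real.sqrt (T - A*B + C^2) with hs
  have hs2 : s^2 = T - A*B + C^2 := Real.sq_sqrt hD0.le
  have hs0 : 0 < s := Real.sqrt_pos.mpr hD0
  have hmu : muCoef rho sigma = (((B - C)/T : ℝ) : ℂ) := by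
    rw [muCoef, htrB, htrC, htrT]; push_cast; ring
  set m : ℝ := (B - C)/T with hmdef
  set G : ℝ := (lam*(m*p+(1-m)*q)-(p-q))*(lam*(m*(1-p)+(1-m)*(1-q))+(p-q))
      - ((lam*(m*z1+(1-m)*w1)-(z1-w1))^2 + (lam*(m*z2+(1-m)*w2)-(z2-w2))^2) with hG
  have hdet : (Hmat rho sigma lam).det = ((G : ℝ) : ℂ) := by
    rw [Matrix.det_fin_two]
    simp only [Hmat, omegaOp, Matrix.sub_apply, Matrix.add_apply, Matrix.smul_apply,
      smul_eq_mul]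
    rw [hmu, h00ρ, h10ρ, h11ρ, h00σ, h10σ, h11σ, hG]
    simp only [Complex.ext_iff, Complex.add_re, Complex.add_im, Complex.sub_re,
      Complex.sub_im, Complex.mul_re, Complex.mul_im, Complex.one_re, Complex.one_im,
      Complex.ofReal_re, Complex.ofReal_im, Complex.conj_re, Complex.conj_im]
    constructor <;> ring
  have hT0' : (2*(p-q)^2+2*((z1-w1)^2+(z2-w2)^2) : ℝ) ≠ 0 := by rw [← hT]; exact hT0.ne'
  have hmT : m * T = B - C := by
    rw [hmdef]; exact div_mul_cancel₀ _ hT0.ne'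
  rw [hB, hC, hT] at hmT
  have h2T : 2*T*G = lam^2*(T - A*B + C^2) - T^2 := by
    have h := h2T_aux p z1 z2 q w1 w2 lam m hT0' hmT
    rw [← hB, ← hC, ← hT, ← hA, ← hG] at h
    exact h
  have hiff : G = 0 ↔ lam^2*(T - A*B + C^2) - T^2 = 0 := by
    constructor
    · intro h
      rw [← h2T, h, mul_zero]
    · intro h
      have h2 : 2*T*G = 0 := h2T.trans h
      rcases mul_eq_zero.mp h2 with h' | h'
      · exact absurd h' (by positivity)
      · exact h'
  have hfact : lam^2*(T - A*B + C^2) - T^2 = (lam*s - T)*(lam*s + T) := by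
    rw [← hs2]; ring
  have h1 : lam*s - T = 0 ↔ lam = T/s := by
    rw [sub_eq_zero, eq_div_iff hs0.ne']
  have h2 : lam*s + T = 0 ↔ lam = -(T/s) := by
    rw [add_eq_zero_iff_eq_neg, show -(T/s) = (-T)/s by ring, eq_div_iff hs0.ne']
  rw [hdet, Complex.ofReal_eq_zero, hiff, hfact, mul_eq_zero, h1, h2]
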